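/- (Theorem 2, per-realization form.) Let H11 ∈ ℂ^{r1×t1}, H21 ∈ ℂ^{r1×t2}, H12 ∈ ℂ^{r2×t1}, H22 ∈ ℂ^{r2×t2}, and write H̄1 = [H11 H21] and H̄2 = [H12 H22]. Assume the genericity conditions: for every (t1+t2)×(t1+t2) Hermitian positive semidefinite matrix A, rank(H̄1 A H̄1*) = min(r1, rank A) and rank(H̄2 A H̄2*) = min(r2, rank A). Then for all integers s, k with 0 < s ≤ t1+t2 and 0 ≤ k ≤ min(t2, s), there exist matrices T1 ∈ ℂ^{(t1+t2)×(t1+t2)} and T2 ∈ ℂ^{t2×t2} with rank(T1 T1* + diag(0_{t1}, T2 T2*)) = s and rank(T2 T2*) = k, and for each power level P ≥ 1 an inflation factor W(P) ∈ ℂ^{t2×(t1+t2)}, such that the sum rate R_sum(P), obtained from the sum-rate expression by replacing T1, T2 with √P·T1, √P·T2 and W with W(P), satisfies: R_sum(P)/log P tends, as P → ∞, to [min(r1, s) − min(r1, k)] + [min(r2, s) − min(r2, s − k)]. Consequently the high-SNR sum-rate scaling factor γ_sum = max over such (s,k) of this quantity is achievable over the no-CSIT cognitive radio channel. -/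

import Mathlib

open Matrix Filter
open scoped ComplexOrder

lemma aux_log_lin (c : ℝ) (hc : 0 < c) :
    Tendsto (fun P : ℝ => Real.log (1 + P * c) / Real.log P) atTop (nhds 1) := by
  have h0 : Tendsto (fun P : ℝ => Real.log (c + P⁻¹)) atTop (nhds (Real.log c)) := by
    have : Tendsto (fun P : ℝ => c + P⁻¹) atTop (nhds (c + 0)) :=
      tendsto_const_nhds.add tendsto_inv_atTop_zero
    rw [add_zero] at this
    exact ((Real.continuousAt_log hc.ne').tendsto).comp this
  have hinv : Tendsto (fun P : ℝ => (Real.log P)⁻¹) atTop (nhds 0) :=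
    Real.tendsto_log_atTop.inv_tendsto_atTop
  have h1 : Tendsto (fun P : ℝ => 1 + Real.log (c + P⁻¹) * (Real.log P)⁻¹) atTop
      (nhds (1 + Real.log c * 0)) := tendsto_const_nhds.add (h0.mul hinv)
  rw [mul_zero, add_zero] at h1
  refine h1.congr' ?_
  filter_upwards [eventually_gt_atTop 1] with P hP
  have hP0 : (0:ℝ) < P := lt_trans one_pos hP
  have hlogP : Real.log P ≠ 0 := ne_of_gt (Real.log_pos hP)
  have hcp : 0 < c + P⁻¹ := by positivity
  have : 1 + P * c = P * (c + P⁻¹) := by field_simp; ring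
  rw [this, Real.log_mul hP0.ne' hcp.ne']
  field_simp


lemma det_one_add_smul {n : ℕ} {M : Matrix (Fin n) (Fin n) ℂ} (hM : M.IsHermitian) (P : ℝ) :
    (1 + (P:ℂ) • M).det = ((∏ i, (1 + P * hM.eigenvalues i) : ℝ) : ℂ) := by
  set U : Matrix (Fin n) (Fin n) ℂ := (hM.eigenvectorUnitary : Matrix (Fin n) (Fin n) ℂ)
  have hU : U * star U = 1 := (Matrix.mem_unitaryGroup_iff).mp hM.eigenvectorUnitary.2
  have key : 1 + (P:ℂ) • M
      = U * (diagonal (fun i => 1 + (P:ℂ) * (hM.eigenvalues i : ℂ))) * star U := by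
    conv_lhs => rw [hM.spectral_theorem, Unitary.conjStarAlgAut_apply]
    have : (diagonal (fun i => 1 + (P:ℂ) * (hM.eigenvalues i : ℂ)))
        = 1 + (P:ℂ) • diagonal ((RCLike.ofReal : ℝ → ℂ) ∘ hM.eigenvalues) := by
      ext i j
      by_cases h : i = j <;> simp [diagonal, h]
    rw [this, mul_add, add_mul, Matrix.mul_one, hU, mul_smul_comm, smul_mul_assoc]
  rw [key, det_mul_right_comm, hU, one_mul, det_diagonal]
  push_cast
  rfl

lemma det_re_pos {n : ℕ} {M : Matrix (Fin n) (Fin n) ℂ} (hM : M.PosSemidef) {P : ℝ}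
    (hP : 0 ≤ P) : 0 < (1 + (P:ℂ) • M).det.re := by
  rw [det_one_add_smul hM.1, Complex.ofReal_re]
  exact Finset.prod_pos fun i _ => by
    have := hM.eigenvalues_nonneg i; positivity

lemma key_tendsto {n : ℕ} {M : Matrix (Fin n) (Fin n) ℂ} (hM : M.PosSemidef) :
    Tendsto (fun P : ℝ => Real.log ((1 + (P:ℂ) • M).det.re) / Real.log P) atTop
      (nhds (M.rank : ℝ)) := by
  classical
  have hrank : (M.rank : ℝ) = ∑ i, if hM.1.eigenvalues i ≠ 0 then (1:ℝ) else 0 := by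
    rw [hM.1.rank_eq_card_non_zero_eigs, Fintype.card_subtype]
    rw [← Finset.sum_boole]
  have hterm : ∀ i : Fin n, Tendsto (fun P : ℝ =>
      Real.log (1 + P * hM.1.eigenvalues i) / Real.log P) atTop
      (nhds (if hM.1.eigenvalues i ≠ 0 then (1:ℝ) else 0)) := by
    intro i
    by_cases h : hM.1.eigenvalues i = 0
    · simp only [h, if_neg (not_not.mpr h)]
      simp [h]
    · rw [if_pos h]
      exact aux_log_lin _ (lt_of_le_of_ne (hM.eigenvalues_nonneg i) (Ne.symm h))
  have hsum : Tendsto (fun P : ℝ => ∑ i, Real.log (1 + P * hM.1.eigenvalues i) / Real.log P)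
      atTop (nhds (M.rank : ℝ)) := by
    rw [hrank]; exact tendsto_finset_sum _ fun i _ => hterm i
  refine hsum.congr' ?_
  filter_upwards [eventually_ge_atTop (0:ℝ)] with P hP
  rw [det_one_add_smul hM.1, Complex.ofReal_re, Real.log_prod, Finset.sum_div]
  intro i _
  have := hM.eigenvalues_nonneg i; positivity

lemma card_filter_val_lt (t k : ℕ) (hk : k ≤ t) :
    (Finset.univ.filter fun i : Fin t => (i : ℕ) < k).card = k := by
  rcases Nat.eq_zero_or_pos t with rfl | ht
  · obtain rfl : k = 0 := Nat.le_zero.mp hk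
    simp
  · have h : (Finset.univ.filter fun i : Fin t => (i : ℕ) < k).card = (Finset.range k).card := by
      refine Finset.card_nbij' (fun a => (a : ℕ))
        (fun n => (⟨n % t, Nat.mod_lt _ ht⟩ : Fin t)) ?_ ?_ ?_ ?_
      · intro a ha
        simp only [Finset.mem_coe, Finset.mem_filter, Finset.mem_univ, true_and] at ha
        simpa using ha
      · intro n hn
        simp only [Finset.mem_coe, Finset.mem_range] at hn
        simp only [Finset.mem_coe, Finset.mem_filter, Finset.mem_univ, true_and]
        rw [Nat.mod_eq_of_lt (lt_of_lt_of_le hn hk)]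
        exact hn
      · intro a ha
        exact Fin.ext (Nat.mod_eq_of_lt a.isLt)
      · intro n hn
        simp only [Finset.mem_coe, Finset.mem_range] at hn
        exact Nat.mod_eq_of_lt (lt_of_lt_of_le hn hk)
    rwa [Finset.card_range] at h

lemma psd_indicator {ι : Type*} [Fintype ι] [DecidableEq ι] (S : Finset ι) :
    (diagonal (fun j => if j ∈ S then (1:ℂ) else 0)).PosSemidef := by
  refine posSemidef_diagonal_iff.mpr fun i => ?_
  split
  · exact zero_le_one
  · exact le_refl 0

lemma rank_indicator {ι : Type*} [Fintype ι] [DecidableEq ι] (S : Finset ι) :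
    (diagonal (fun j => if j ∈ S then (1:ℂ) else 0)).rank = S.card := by
  rw [Matrix.rank_diagonal, Fintype.card_subtype]
  congr 1
  ext j
  simp

lemma sandwich {r t1 t2 : ℕ} (A : Matrix (Fin r) (Fin t1) ℂ) (B : Matrix (Fin r) (Fin t2) ℂ)
    (M : Matrix (Fin t2) (Fin t2) ℂ) :
    fromCols A B * fromBlocks (0 : Matrix (Fin t1) (Fin t1) ℂ) 0 0 M * (fromCols A B)ᴴ = B * M * Bᴴ := by
  rw [conjTranspose_fromCols_eq_fromRows_conjTranspose, fromCols_mul_fromBlocks,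
    fromCols_mul_fromRows]
  simp

lemma combine_sandwich {m n : Type*} [Fintype m] [Fintype n] [DecidableEq m]
    (G : Matrix m n ℂ) (X Y Z : Matrix n n ℂ)
    (P : ℝ) (h : X + Y = Z) :
    (1 : Matrix m m ℂ) + G * ((P:ℂ) • X) * Gᴴ + G * ((P:ℂ) • Y) * Gᴴ
      = 1 + (P:ℂ) • (G * Z * Gᴴ) := by
  subst h
  rw [Matrix.mul_smul, Matrix.mul_smul, Matrix.smul_mul, Matrix.smul_mul, add_assoc, ← smul_add,
    Matrix.mul_add, Matrix.add_mul]

lemma single_sandwich {m n : Type*} [Fintype m] [Fintype n] [DecidableEq m]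
    (G : Matrix m n ℂ) (X : Matrix n n ℂ) (P : ℝ) :
    (1 : Matrix m m ℂ) + G * ((P:ℂ) • X) * Gᴴ = 1 + (P:ℂ) • (G * X * Gᴴ) := by
  rw [Matrix.mul_smul, Matrix.smul_mul]

/-- The per-realization sum rate of the cognitive radio channel:
`R_sum = log( det(I + H̄1 T1 T1* H̄1* + H21 T2 T2* H21*) / det(I + H21 T2 T2* H21*) )
       + log( det(I + H22 T2 T2* H22* + H̄2 T1 T1* H̄2*) / det D2 )`,
where `H̄1 = [H11 H21]`, `H̄2 = [H12 H22]` and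
`D2 = [[I + W T1 T1* W*, T2* H22* + W T1 T1* H̄2*],
       [H22 T2 + H̄2 T1 T1* W*, I + H22 T2 T2* H22* + H̄2 T1 T1* H̄2*]]`. -/
noncomputable def crcSumRate {r1 r2 t1 t2 : ℕ}
    (H11 : Matrix (Fin r1) (Fin t1) ℂ) (H21 : Matrix (Fin r1) (Fin t2) ℂ)
    (H12 : Matrix (Fin r2) (Fin t1) ℂ) (H22 : Matrix (Fin r2) (Fin t2) ℂ)
    (T1 : Matrix (Fin t1 ⊕ Fin t2) (Fin t1 ⊕ Fin t2) ℂ)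
    (T2 : Matrix (Fin t2) (Fin t2) ℂ)
    (W : Matrix (Fin t2) (Fin t1 ⊕ Fin t2) ℂ) : ℝ :=
  Real.log ((1 + fromCols H11 H21 * (T1 * T1ᴴ) * (fromCols H11 H21)ᴴ
        + H21 * (T2 * T2ᴴ) * H21ᴴ).det.re
      / (1 + H21 * (T2 * T2ᴴ) * H21ᴴ).det.re)
  + Real.log ((1 + H22 * (T2 * T2ᴴ) * H22ᴴ
        + fromCols H12 H22 * (T1 * T1ᴴ) * (fromCols H12 H22)ᴴ).det.re
      / (fromBlocks
          (1 + W * (T1 * T1ᴴ) * Wᴴ)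
          (T2ᴴ * H22ᴴ + W * (T1 * T1ᴴ) * (fromCols H12 H22)ᴴ)
          (H22 * T2 + fromCols H12 H22 * (T1 * T1ᴴ) * Wᴴ)
          (1 + H22 * (T2 * T2ᴴ) * H22ᴴ
            + fromCols H12 H22 * (T1 * T1ᴴ) * (fromCols H12 H22)ᴴ)).det.re)

set_option maxHeartbeats 2000000 in
/-- Theorem 2, per-realization form: under the genericity conditions on
`H̄1 = [H11 H21]` and `H̄2 = [H12 H22]`, for all integers `s, k` with `0 < s ≤ t1 + t2`
and `0 ≤ k ≤ min(t2, s)`, there exist `T1, T2` with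
`rank(T1 T1* + diag(0, T2 T2*)) = s` and `rank(T2 T2*) = k`, and for each power level
an inflation factor `W(P)`, such that the sum rate with `T1, T2` replaced by
`√P·T1, √P·T2` and `W` by `W(P)` satisfies
`R_sum(P)/log P → [min(r1,s) − min(r1,k)] + [min(r2,s) − min(r2,s−k)]` as `P → ∞`. -/
theorem crc_sum_rate_scaling {r1 r2 t1 t2 : ℕ}
    (H11 : Matrix (Fin r1) (Fin t1) ℂ) (H21 : Matrix (Fin r1) (Fin t2) ℂ)
    (H12 : Matrix (Fin r2) (Fin t1) ℂ) (H22 : Matrix (Fin r2) (Fin t2) ℂ)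
    (hgen1 : ∀ A : Matrix (Fin t1 ⊕ Fin t2) (Fin t1 ⊕ Fin t2) ℂ, A.PosSemidef →
      (fromCols H11 H21 * A * (fromCols H11 H21)ᴴ).rank = min r1 A.rank)
    (hgen2 : ∀ A : Matrix (Fin t1 ⊕ Fin t2) (Fin t1 ⊕ Fin t2) ℂ, A.PosSemidef →
      (fromCols H12 H22 * A * (fromCols H12 H22)ᴴ).rank = min r2 A.rank)
    (s k : ℕ) (hs0 : 0 < s) (hs : s ≤ t1 + t2) (hk : k ≤ min t2 s) :
    ∃ (T1 : Matrix (Fin t1 ⊕ Fin t2) (Fin t1 ⊕ Fin t2) ℂ)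
      (T2 : Matrix (Fin t2) (Fin t2) ℂ)
      (W : ℝ → Matrix (Fin t2) (Fin t1 ⊕ Fin t2) ℂ),
      (T1 * T1ᴴ + fromBlocks 0 0 0 (T2 * T2ᴴ)).rank = s
      ∧ (T2 * T2ᴴ).rank = k
      ∧ Tendsto (fun P : ℝ =>
            crcSumRate H11 H21 H12 H22
              ((Real.sqrt P : ℂ) • T1) ((Real.sqrt P : ℂ) • T2) (W P) / Real.log P)
          atTop
          (nhds (((min r1 s : ℝ) - (min r1 k : ℝ))
            + ((min r2 s : ℝ) - (min r2 (s - k) : ℝ)))) := by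
  classical
  have hk1 : k ≤ t2 := le_trans hk (min_le_left _ _)
  have hk2 : k ≤ s := le_trans hk (min_le_right _ _)
  -- index sets
  set Kf : Finset (Fin t1 ⊕ Fin t2) :=
    (Finset.univ.filter fun i : Fin t2 => (i : ℕ) < k).image Sum.inr with hKfdef
  have hKcard : Kf.card = k := by
    rw [hKfdef, Finset.card_image_of_injective _ Sum.inr_injective, card_filter_val_lt t2 k hk1]
  have hcompl : s - k ≤ Kfᶜ.card := by
    rw [Finset.card_compl, hKcard]
    simp only [Fintype.card_sum, Fintype.card_fin]
    omega
  obtain ⟨Sf, hSsub, hScard⟩ := Finset.exists_subset_card_eq hcompl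
  have hdisj : Disjoint Sf Kf :=
    Finset.disjoint_left.mpr fun a haS haK => (Finset.mem_compl.mp (hSsub haS)) haK
  have hUcard : (Sf ∪ Kf).card = s := by
    rw [Finset.card_union_of_disjoint hdisj, hScard, hKcard]
    omega
  set v : Fin t2 → ℂ := fun i => if (i : ℕ) < k then 1 else 0 with hvdef
  set wS : Fin t1 ⊕ Fin t2 → ℂ := fun j => if j ∈ Sf then 1 else 0 with hwSdef
  set wK : Fin t1 ⊕ Fin t2 → ℂ := fun j => if j ∈ Kf then 1 else 0 with hwKdef
  set wU : Fin t1 ⊕ Fin t2 → ℂ := fun j => if j ∈ Sf ∪ Kf then 1 else 0 with hwUdef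
  have hT1 : (diagonal wS) * (diagonal wS)ᴴ = diagonal wS := by
    rw [diagonal_conjTranspose, diagonal_mul_diagonal]
    exact congrArg diagonal (funext fun j => by by_cases h : j ∈ Sf <;> simp [hwSdef, h])
  have hT2 : (diagonal v) * (diagonal v)ᴴ = diagonal v := by
    rw [diagonal_conjTranspose, diagonal_mul_diagonal]
    exact congrArg diagonal (funext fun i => by by_cases h : (i : ℕ) < k <;> simp [hvdef, h])
  have hFB : fromBlocks (0 : Matrix (Fin t1) (Fin t1) ℂ) 0 0 (diagonal v) = diagonal wK := by
    rw [← diagonal_zero, fromBlocks_diagonal]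
    refine congrArg diagonal (funext fun j => ?_)
    cases j with
    | inl a => simp [hwKdef, hKfdef]
    | inr i => simp [hwKdef, hKfdef, hvdef]
  have hdU : diagonal wS + diagonal wK = diagonal wU := by
    rw [diagonal_add]
    refine congrArg diagonal (funext fun j => ?_)
    by_cases hS : j ∈ Sf
    · have hK : j ∉ Kf := Finset.disjoint_left.mp hdisj hS
      simp [hwSdef, hwKdef, hwUdef, hS, hK]
    · by_cases hK : j ∈ Kf <;> simp [hwSdef, hwKdef, hwUdef, hS, hK]
  have hpsdS : (diagonal wS).PosSemidef := by rw [hwSdef]; exact psd_indicator Sf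
  have hpsdK : (diagonal wK).PosSemidef := by rw [hwKdef]; exact psd_indicator Kf
  have hpsdU : (diagonal wU).PosSemidef := by rw [hwUdef]; exact psd_indicator (Sf ∪ Kf)
  have hrS : (diagonal wS).rank = s - k := by rw [hwSdef, rank_indicator, hScard]
  have hrK : (diagonal wK).rank = k := by rw [hwKdef, rank_indicator, hKcard]
  have hrU : (diagonal wU).rank = s := by rw [hwUdef, rank_indicator, hUcard]
  refine ⟨diagonal wS, diagonal v, fun _ => 0, ?_, ?_, ?_⟩
  · rw [hT1, hT2, hFB, hdU, hrU]
  · rw [hT2]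
    have hv' : v = fun i => if i ∈ (Finset.univ.filter fun i : Fin t2 => (i : ℕ) < k) then 1 else 0 := by
      funext i
      simp [hvdef]
    rw [hv', rank_indicator, card_filter_val_lt t2 k hk1]
  · have hpsd1 : (fromCols H11 H21 * diagonal wU * (fromCols H11 H21)ᴴ).PosSemidef :=
      hpsdU.mul_mul_conjTranspose_same _
    have hpsd2 : (fromCols H11 H21 * diagonal wK * (fromCols H11 H21)ᴴ).PosSemidef :=
      hpsdK.mul_mul_conjTranspose_same _
    have hpsd3 : (fromCols H12 H22 * diagonal wU * (fromCols H12 H22)ᴴ).PosSemidef :=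
      hpsdU.mul_mul_conjTranspose_same _
    have hpsd4 : (fromCols H12 H22 * diagonal wS * (fromCols H12 H22)ᴴ).PosSemidef :=
      hpsdS.mul_mul_conjTranspose_same _
    have ht1 := key_tendsto hpsd1
    have ht2 := key_tendsto hpsd2
    have ht3 := key_tendsto hpsd3
    have ht4 := key_tendsto hpsd4
    rw [hgen1 _ hpsdU, hrU] at ht1
    rw [hgen1 _ hpsdK, hrK] at ht2
    rw [hgen2 _ hpsdU, hrU] at ht3
    rw [hgen2 _ hpsdS, hrS] at ht4
    have big := (ht1.sub ht2).add (ht3.sub ht4)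
    have hcast : ((r1 ⊓ s : ℕ) - (r1 ⊓ k : ℕ) + ((r2 ⊓ s : ℕ) - (r2 ⊓ (s - k) : ℕ)) : ℝ)
        = ((r1:ℝ) ⊓ (s:ℝ) - (r1:ℝ) ⊓ (k:ℝ) + ((r2:ℝ) ⊓ (s:ℝ) - (r2:ℝ) ⊓ ((s:ℝ) - (k:ℝ)))) := by
      push_cast [Nat.cast_sub hk2]
      ring_nf
    rw [← hcast]
    refine big.congr' ?_
    filter_upwards [eventually_ge_atTop (0:ℝ)] with P hP
    have hP2 : ((Real.sqrt P : ℂ)) * ((Real.sqrt P : ℂ)) = (P:ℂ) := by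
      rw [← Complex.ofReal_mul, Real.mul_self_sqrt hP]
    have hsT1 : ((Real.sqrt P : ℂ) • diagonal wS) * ((Real.sqrt P : ℂ) • diagonal wS)ᴴ
        = (P:ℂ) • diagonal wS := by
      rw [conjTranspose_smul, Matrix.smul_mul, Matrix.mul_smul, smul_smul,
        RCLike.star_def, Complex.conj_ofReal, hP2, hT1]
    have hsT2 : ((Real.sqrt P : ℂ) • diagonal v) * ((Real.sqrt P : ℂ) • diagonal v)ᴴ
        = (P:ℂ) • diagonal v := by
      rw [conjTranspose_smul, Matrix.smul_mul, Matrix.mul_smul, smul_smul,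
        RCLike.star_def, Complex.conj_ofReal, hP2, hT2]
    have hblk : fromBlocks (0 : Matrix (Fin t1) (Fin t1) ℂ) 0 0 ((P:ℂ) • diagonal v)
        = (P:ℂ) • diagonal wK := by
      rw [← hFB, fromBlocks_smul]
      simp
    have e1 : (1 : Matrix (Fin r1) (Fin r1) ℂ)
          + fromCols H11 H21 * ((P:ℂ) • diagonal wS) * (fromCols H11 H21)ᴴ
          + H21 * ((P:ℂ) • diagonal v) * H21ᴴ
        = 1 + (P:ℂ) • (fromCols H11 H21 * diagonal wU * (fromCols H11 H21)ᴴ) := by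
      rw [← sandwich H11 H21 ((P:ℂ) • diagonal v), hblk]
      exact combine_sandwich _ _ _ _ P hdU
    have e2 : (1 : Matrix (Fin r1) (Fin r1) ℂ) + H21 * ((P:ℂ) • diagonal v) * H21ᴴ
        = 1 + (P:ℂ) • (fromCols H11 H21 * diagonal wK * (fromCols H11 H21)ᴴ) := by
      rw [← sandwich H11 H21 ((P:ℂ) • diagonal v), hblk]
      exact single_sandwich _ _ P
    have e3 : (1 : Matrix (Fin r2) (Fin r2) ℂ) + H22 * ((P:ℂ) • diagonal v) * H22ᴴ
          + fromCols H12 H22 * ((P:ℂ) • diagonal wS) * (fromCols H12 H22)ᴴ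
        = 1 + (P:ℂ) • (fromCols H12 H22 * diagonal wU * (fromCols H12 H22)ᴴ) := by
      rw [← sandwich H12 H22 ((P:ℂ) • diagonal v), hblk]
      have h' : diagonal wK + diagonal wS = diagonal wU := by rw [add_comm, hdU]
      have := combine_sandwich (fromCols H12 H22) (diagonal wK) (diagonal wS) (diagonal wU) P h'
      exact this
    have hCB : H22 * ((Real.sqrt P:ℂ) • diagonal v)
          * (((Real.sqrt P:ℂ) • diagonal v)ᴴ * H22ᴴ) = H22 * ((P:ℂ) • diagonal v) * H22ᴴ := by
      rw [Matrix.mul_assoc H22, ← Matrix.mul_assoc ((Real.sqrt P:ℂ) • diagonal v), hsT2,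
        ← Matrix.mul_assoc]
    have e4 : (1 + (P:ℂ) • (fromCols H12 H22 * diagonal wU * (fromCols H12 H22)ᴴ))
          - H22 * ((P:ℂ) • diagonal v) * H22ᴴ
        = 1 + (P:ℂ) • (fromCols H12 H22 * diagonal wS * (fromCols H12 H22)ᴴ) := by
      rw [← e3, ← single_sandwich (fromCols H12 H22) (diagonal wS) P]
      abel
    have p1 := det_re_pos hpsd1 hP
    have p2 := det_re_pos hpsd2 hP
    have p3 := det_re_pos hpsd3 hP
    have p4 := det_re_pos hpsd4 hP
    simp only [crcSumRate, Matrix.zero_mul, Matrix.mul_zero, conjTranspose_zero, add_zero]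
    rw [hsT1, hsT2, e1, e2, e3, det_fromBlocks_one₁₁, hCB, e4,
      Real.log_div p1.ne' p2.ne', Real.log_div p3.ne' p4.ne', add_div, sub_div, sub_div]
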